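/- Every perfect non-bipartite 2-coloring of Ci_∞(D_n) whose outer degrees b, c satisfy b + c = 2n + 1 is periodic with period length 2n + 1, i.e., φ(i) = φ(i + 2n + 1) for all integers i. -/

import Mathlib

/-- Neighborhood of `i` in the infinite circulant graph `Ci_∞(D_n)`,
`D_n = {±1, ±3, …, ±(2n-1)}`: the integers at odd distance less than `2n` from `i`. -/
noncomputable def nbrs (n : ℕ) (i : ℤ) : Finset ℤ :=
  (Finset.Icc (i - (2*(n:ℤ) - 1)) (i + (2*(n:ℤ) - 1))).filter (fun j => Odd (j - i))

/-- `φ` is a perfect 2-coloring of `Ci_∞(D_n)` with outer degrees `(b, c)`: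
every vertex of color 0 (black) has exactly `b` neighbors of color 1 (white), and
every vertex of color 1 has exactly `c` neighbors of color 0. -/
def Perfect2 (n : ℕ) (φ : ℤ → Fin 2) (b c : ℕ) : Prop :=
  (∀ i, φ i = 0 → ((nbrs n i).filter (fun j => φ j = 1)).card = b) ∧
  (∀ i, φ i = 1 → ((nbrs n i).filter (fun j => φ j = 0)).card = c)

lemma mem_nbrs {n : ℕ} {i j : ℤ} :
    j ∈ nbrs n i ↔ i - (2*(n:ℤ)-1) ≤ j ∧ j ≤ i + (2*(n:ℤ)-1) ∧ (j - i) % 2 = 1 := by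
  simp only [nbrs, Finset.mem_filter, Finset.mem_Icc, Int.odd_iff]
  omega

lemma nbrs_card (n : ℕ) (i : ℤ) : (nbrs n i).card = 2*n := by
  induction n with
  | zero =>
    have : nbrs 0 i = ∅ := by
      apply Finset.eq_empty_of_forall_notMem
      intro j hj
      rw [mem_nbrs] at hj
      omega
    simp [this]
  | succ n ih =>
    have hstep : nbrs (n+1) i
        = insert (i - (2*(n:ℤ)+1)) (insert (i + (2*(n:ℤ)+1)) (nbrs n i)) := by
      ext j
      simp only [mem_nbrs, Finset.mem_insert]
      push_cast
      omega
    have h1 : i + (2*(n:ℤ)+1) ∉ nbrs n i := by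
      rw [mem_nbrs]; omega
    have h2 : i - (2*(n:ℤ)+1) ∉ insert (i + (2*(n:ℤ)+1)) (nbrs n i) := by
      simp only [Finset.mem_insert, mem_nbrs]
      omega
    rw [hstep, Finset.card_insert_of_notMem h2, Finset.card_insert_of_notMem h1, ih]
    omega

lemma nbrs_shift (n : ℕ) (i t : ℤ) :
    nbrs n (i + t) = (nbrs n i).map ⟨fun j => j + t, add_left_injective t⟩ := by
  ext j
  simp only [Finset.mem_map, Function.Embedding.coeFn_mk, mem_nbrs]
  constructor
  · intro h
    exact ⟨j - t, by omega, by ring⟩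
  · rintro ⟨a, ha, rfl⟩
    omega

/-- auxiliary difference function -/
def dstep (n : ℕ) (u : ℤ → ℤ) (j : ℤ) : ℤ := u (j + (2*(n:ℤ)+1)) - u j

/-- Every perfect non-bipartite 2-coloring with `b + c = 2n+1` has period `2n+1`. -/
theorem period_plus (n b c : ℕ) (hn : 0 < n) (hb : 0 < b) (hc : 0 < c)
    (hbc : b + c = 2*n + 1)
    (φ : ℤ → Fin 2) (hφ : Perfect2 n φ b c)
    (hnonbip : ¬ (∀ i j : ℤ, Even i → Odd j → φ i ≠ φ j)) :
    ∀ i : ℤ, φ (i + (2*(n:ℤ) + 1)) = φ i := by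
  obtain ⟨hφ0, hφ1⟩ := hφ
  set u : ℤ → ℤ := fun i => ((φ i).val : ℤ) with hu
  have hfin2 : ∀ v : Fin 2, v = 0 ∨ v = 1 := by decide
  have hu01 : ∀ x : ℤ, u x = 0 ∨ u x = 1 := by
    intro x
    rcases hfin2 (φ x) with h | h <;> simp [hu, h]
  have hsum1 : ∀ i : ℤ,
      (∑ j ∈ nbrs n i, u j) = (((nbrs n i).filter (fun j => φ j = 1)).card : ℤ) := by
    intro i
    calc (∑ j ∈ nbrs n i, u j)
        = ∑ j ∈ nbrs n i, (if φ j = 1 then (1:ℤ) else 0) := by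
          refine Finset.sum_congr rfl fun j _ => ?_
          rcases hfin2 (φ j) with h | h <;> simp [hu, h]
      _ = _ := by rw [Finset.sum_boole]
  have hcard01 : ∀ i : ℤ,
      ((nbrs n i).filter (fun j => φ j = 0)).card
        + ((nbrs n i).filter (fun j => φ j = 1)).card = 2*n := by
    intro i
    have hpart := Finset.card_filter_add_card_filter_not
      (s := nbrs n i) (p := fun j => φ j = 0)
    have hfe : (nbrs n i).filter (fun j => ¬ φ j = 0) = (nbrs n i).filter (fun j => φ j = 1) := by
      apply Finset.filter_congr
      intro j _
      rcases hfin2 (φ j) with h | h <;> simp [h]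
    rw [hfe] at hpart
    rw [hpart, nbrs_card]
  have hF : ∀ i : ℤ, (∑ j ∈ nbrs n i, u j) + u i = (b:ℤ) := by
    intro i
    rcases hfin2 (φ i) with h | h
    · have hc1 := hφ0 i h
      rw [hsum1 i, hc1]
      simp [hu, h]
    · have hc0 := hφ1 i h
      have h2 := hcard01 i
      rw [hsum1 i]
      have hval : u i = 1 := by simp [hu, h]
      rw [hval]
      have hnat : ((nbrs n i).filter (fun j => φ j = 1)).card + 1 = b := by omega
      exact_mod_cast hnat
  have hshift2 : ∀ i : ℤ,
      nbrs n (i+2) = insert (i + (2*(n:ℤ)+1)) ((nbrs n i).erase (i - (2*(n:ℤ)-1))) := by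
    intro i
    ext j
    simp only [mem_nbrs, Finset.mem_insert, Finset.mem_erase]
    omega
  have hkey : ∀ i : ℤ, u (i + (2*(n:ℤ)+1)) + u (i+2) = u i + u (i - (2*(n:ℤ)-1)) := by
    intro i
    have e1 := hF i
    have e2 := hF (i+2)
    have hmem : (i - (2*(n:ℤ)-1)) ∈ nbrs n i := by
      rw [mem_nbrs]; omega
    have hnotmem : (i + (2*(n:ℤ)+1)) ∉ (nbrs n i).erase (i - (2*(n:ℤ)-1)) := by
      simp only [Finset.mem_erase, mem_nbrs]
      omega
    rw [hshift2 i, Finset.sum_insert hnotmem, Finset.sum_erase_eq_sub hmem] at e2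
    linarith
  have hdflip : ∀ j : ℤ, dstep n u (j + (2*(n:ℤ)-1)) = - dstep n u j := by
    intro j
    have hk := hkey (j + (2*(n:ℤ)-1))
    have a1 : j + (2*(n:ℤ)-1) + 2 = j + (2*(n:ℤ)+1) := by ring
    have a2 : j + (2*(n:ℤ)-1) - (2*(n:ℤ)-1) = j := by ring
    rw [a1, a2] at hk
    simp only [dstep]
    linarith
  have hditer : ∀ (k : ℕ) (j : ℤ),
      dstep n u (j + (2*(n:ℤ)-1) * k) = (-1)^k * dstep n u j := by
    intro k
    induction k with
    | zero => intro j; simp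
    | succ k ih =>
      intro j
      have a1 : j + (2*(n:ℤ)-1) * ((k:ℕ)+1 : ℕ) = (j + (2*(n:ℤ)-1)*k) + (2*(n:ℤ)-1) := by
        push_cast; ring
      rw [a1, hdflip, ih]
      ring
  set N : ℤ := (2*(n:ℤ)-1) * (2*(n:ℤ)+1) with hNdef
  have hdN : ∀ x : ℤ, dstep n u (x + N) = - dstep n u x := by
    intro x
    have h := hditer (2*n+1) x
    have a1 : x + (2*(n:ℤ)-1) * ((2*n+1 : ℕ) : ℤ) = x + N := by push_cast; ring
    rw [a1] at h
    rw [h]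
    have hodd : Odd (2*n+1) := ⟨n, by ring⟩
    rw [hodd.neg_one_pow]
    ring
  by_cases hall : ∀ x : ℤ, u (x + N) = 1 - u x
  · exfalso
    have e1 := hF 0
    have e2 := hF (0 + N)
    rw [nbrs_shift n 0 N, Finset.sum_map] at e2
    simp only [Function.Embedding.coeFn_mk] at e2
    have e3 : (∑ j ∈ nbrs n 0, u (j + N)) = ∑ j ∈ nbrs n 0, (1 - u j) :=
      Finset.sum_congr rfl (fun j _ => hall j)
    rw [e3, Finset.sum_sub_distrib, Finset.sum_const, nbrs_card, hall 0] at e2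
    simp only [nsmul_eq_mul, mul_one] at e2
    have hbig : 2*(n:ℤ) + 1 = 2 * (b:ℤ) := by push_cast at e2 ⊢; linarith
    omega
  · push_neg at hall
    obtain ⟨x₀, hx₀⟩ := hall
    have hsame : u (x₀ + N) = u x₀ := by
      rcases hu01 x₀ with h | h <;> rcases hu01 (x₀ + N) with h' | h' <;> omega
    have hccshift : ∀ x : ℤ,
        u (x + (2*(n:ℤ)+1)) + u (x + (2*(n:ℤ)+1) + N) = u x + u (x + N) := by
      intro x
      have h2 := hdN x
      have a1 : x + N + (2*(n:ℤ)+1) = x + (2*(n:ℤ)+1) + N := by ring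
      simp only [dstep] at h2
      rw [a1] at h2
      linarith
    have hchain : ∀ m : ℤ,
        u (x₀ + (2*(n:ℤ)+1)*m) + u (x₀ + (2*(n:ℤ)+1)*m + N) = u x₀ + u (x₀ + N) := by
      intro m
      induction m using Int.induction_on with
      | zero => simp
      | succ k ih =>
        have a1 : x₀ + (2*(n:ℤ)+1)*((k:ℤ)+1) = (x₀ + (2*(n:ℤ)+1)*(k:ℤ)) + (2*(n:ℤ)+1) := by
          ring
        rw [a1, hccshift]
        exact ih
      | pred k ih =>
        have h := hccshift (x₀ + (2*(n:ℤ)+1)*(-(k:ℤ)-1))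
        have a1 : x₀ + (2*(n:ℤ)+1)*(-(k:ℤ)-1) + (2*(n:ℤ)+1) = x₀ + (2*(n:ℤ)+1)*(-(k:ℤ)) := by
          ring
        rw [a1] at h
        linarith
    have huchain : ∀ m : ℤ, u (x₀ + (2*(n:ℤ)+1)*m) = u x₀ := by
      intro m
      have h1 := hchain m
      rcases hu01 (x₀ + (2*(n:ℤ)+1)*m) with h | h <;>
        rcases hu01 (x₀ + (2*(n:ℤ)+1)*m + N) with h' | h' <;>
        rcases hu01 x₀ with h'' | h'' <;> omega
    have hdchain : ∀ m : ℤ, dstep n u (x₀ + (2*(n:ℤ)+1)*m) = 0 := by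
      intro m
      simp only [dstep]
      have a1 : x₀ + (2*(n:ℤ)+1)*m + (2*(n:ℤ)+1) = x₀ + (2*(n:ℤ)+1)*(m+1) := by ring
      rw [a1, huchain m, huchain (m+1)]
      ring
    have hdzero : ∀ j : ℤ, dstep n u j = 0 → ∀ β : ℤ, dstep n u (j + (2*(n:ℤ)-1)*β) = 0 := by
      intro j hj β
      induction β using Int.induction_on with
      | zero => simpa using hj
      | succ k ih =>
        have a1 : j + (2*(n:ℤ)-1)*((k:ℤ)+1) = (j + (2*(n:ℤ)-1)*(k:ℤ)) + (2*(n:ℤ)-1) := by ring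
        rw [a1, hdflip, ih]
        ring
      | pred k ih =>
        have h := hdflip (j + (2*(n:ℤ)-1)*(-(k:ℤ)-1))
        have a1 : j + (2*(n:ℤ)-1)*(-(k:ℤ)-1) + (2*(n:ℤ)-1) = j + (2*(n:ℤ)-1)*(-(k:ℤ)) := by
          ring
        rw [a1, ih] at h
        linarith
    intro i
    have hkey0 : dstep n u i = 0 := by
      have h0 := hdzero (x₀ + (2*(n:ℤ)+1)*((i - x₀)*(n:ℤ))) (hdchain _) (-((i - x₀)*((n:ℤ)+1)))
      have a1 : x₀ + (2*(n:ℤ)+1)*((i - x₀)*(n:ℤ)) + (2*(n:ℤ)-1)*(-((i - x₀)*((n:ℤ)+1))) = i := by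
        ring
      rwa [a1] at h0
    have huEq : u (i + (2*(n:ℤ)+1)) = u i := by
      simp only [dstep] at hkey0
      linarith
    have huEq' : ((φ (i + (2*(n:ℤ)+1))).val : ℤ) = ((φ i).val : ℤ) := huEq
    have hval : (φ (i + (2*(n:ℤ)+1))).val = (φ i).val := by exact_mod_cast huEq'
    exact Fin.val_injective hval
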